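/- Let S be a measurable space, κ a Markov kernel from S to S, ν a probability measure on S, and δ ∈ (0,1] such that κ(x, A) ≥ δ·ν(A) for every x ∈ S and every measurable set A (the minorization/Doeblin condition). Then for any two probability measures μ₁, μ₂ on S, sup over measurable A of |(μ₁.bind κ)(A) − (μ₂.bind κ)(A)| ≤ (1 − δ) · sup over measurable A of |μ₁(A) − μ₂(A)|; that is, one step of the kernel contracts the total variation distance between probability measures by the factor (1 − δ). -/

import Mathlib

open MeasureTheory ProbabilityTheory

/-- The total variation distance between two measures:
`dTV(μ, ν) = sup { |μ(A) - ν(A)| : A measurable }`. -/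
noncomputable def tvDist {S : Type*} [MeasurableSpace S] (μ ν : Measure S) : ℝ :=
  ⨆ A : {A : Set S // MeasurableSet A}, |(μ A).toReal - (ν A).toReal|

section Aux

variable {S : Type*} [MeasurableSpace S]

lemma tv_bdd (μ ν : Measure S) [IsProbabilityMeasure μ] [IsProbabilityMeasure ν] :
    BddAbove (Set.range fun A : {A : Set S // MeasurableSet A} =>
      |(μ A).toReal - (ν A).toReal|) := by
  refine ⟨1, ?_⟩
  rintro x ⟨A, rfl⟩
  have h1 : (μ A).toReal ≤ 1 := by
    simpa using ENNReal.toReal_mono (by simp) (prob_le_one (μ := μ) (s := A))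
  have h2 : (ν A).toReal ≤ 1 := by
    simpa using ENNReal.toReal_mono (by simp) (prob_le_one (μ := ν) (s := A))
  have h3 : 0 ≤ (μ A).toReal := ENNReal.toReal_nonneg
  have h4 : 0 ≤ (ν A).toReal := ENNReal.toReal_nonneg
  rw [abs_sub_le_iff]
  constructor <;> linarith

lemma abs_apply_le_tvDist (μ ν : Measure S) [IsProbabilityMeasure μ] [IsProbabilityMeasure ν]
    {A : Set S} (hA : MeasurableSet A) :
    |(μ A).toReal - (ν A).toReal| ≤ tvDist μ ν :=
  le_ciSup (tv_bdd μ ν) ⟨A, hA⟩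

lemma tvDist_nonneg (μ ν : Measure S) [IsProbabilityMeasure μ] [IsProbabilityMeasure ν] :
    0 ≤ tvDist μ ν :=
  le_trans (abs_nonneg _) (abs_apply_le_tvDist μ ν MeasurableSet.empty)

lemma tvDist_comm (μ ν : Measure S) : tvDist μ ν = tvDist ν μ := by
  unfold tvDist
  exact iSup_congr fun A => abs_sub_comm _ _

lemma doeblin_key
    (κ : Kernel S S) [IsMarkovKernel κ]
    (ν : Measure S) [IsProbabilityMeasure ν]
    (δ : ℝ) (hδ : δ ∈ Set.Ioc (0 : ℝ) 1)
    (hmin : ∀ x : S, ∀ A : Set S, MeasurableSet A → ENNReal.ofReal δ * ν A ≤ κ x A)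
    (μ₁ μ₂ : Measure S) [IsProbabilityMeasure μ₁] [IsProbabilityMeasure μ₂]
    {A : Set S} (hA : MeasurableSet A) :
    ((μ₁.bind (fun x => κ x)) A).toReal
      ≤ ((μ₂.bind (fun x => κ x)) A).toReal + (1 - δ) * tvDist μ₁ μ₂ := by
  obtain ⟨hδ0, hδ1⟩ := hδ
  have hδ0' : (0:ℝ) ≤ δ := hδ0.le
  have h1δ : (0:ℝ) ≤ 1 - δ := by linarith
  set tv := tvDist μ₁ μ₂ with htv_def
  have htv : 0 ≤ tv := tvDist_nonneg μ₁ μ₂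
  set δE := ENNReal.ofReal δ with hδE
  set a := δE * ν A with ha
  set g := fun x => κ x A - a with hg
  -- decomposition
  have h_decomp : ∀ x, κ x A = g x + a := fun x =>
    (tsub_add_cancel_of_le (hmin x A hA)).symm
  -- upper bound on g
  have hsum : ENNReal.ofReal (1 - δ) + δE = 1 := by
    rw [hδE, ← ENNReal.ofReal_add h1δ hδ0']
    simp
  have hg_le : ∀ x, g x ≤ ENNReal.ofReal (1 - δ) := by
    intro x
    have hν : ν A + ν Aᶜ = 1 := by
      rw [measure_add_measure_compl hA, measure_univ]
    have hδsplit : a + δE * ν Aᶜ = δE := by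
      rw [ha, ← mul_add, hν, mul_one]
    have hκ : κ x A + κ x Aᶜ = 1 := by
      rw [measure_add_measure_compl hA, measure_univ]
    have h1 : g x + a + δE * ν Aᶜ ≤ 1 := by
      calc g x + a + δE * ν Aᶜ = κ x A + δE * ν Aᶜ := by
            rw [← h_decomp x]
        _ ≤ κ x A + κ x Aᶜ := add_le_add_right (hmin x Aᶜ hA.compl) _
        _ = 1 := hκ
    have h2 : g x + δE ≤ 1 := by
      rw [← hδsplit, ← add_assoc]; exact h1
    have h3 : g x + δE ≤ ENNReal.ofReal (1 - δ) + δE := by rw [hsum]; exact h2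
    exact (ENNReal.add_le_add_iff_right (show δE ≠ ⊤ from ENNReal.ofReal_ne_top)).mp h3
  have hg_ne_top : ∀ x, g x ≠ ⊤ := fun x =>
    ne_top_of_le_ne_top ENNReal.ofReal_ne_top (hg_le x)
  -- g as ofReal of real function
  set f := fun x => (g x).toReal with hf
  have hf_nn : ∀ x, 0 ≤ f x := fun x => ENNReal.toReal_nonneg
  have hg_meas : Measurable g := (κ.measurable_coe hA).sub measurable_const
  have hf_meas : Measurable f := hg_meas.ennreal_toReal
  have h_ofReal : ∀ x, ENNReal.ofReal (f x) = g x := fun x =>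
    ENNReal.ofReal_toReal (hg_ne_top x)
  have hf_le : ∀ x, f x ≤ 1 - δ := fun x =>
    ENNReal.toReal_le_of_le_ofReal h1δ (hg_le x)
  -- bind formula
  have hbind : ∀ (μ : Measure S) [IsProbabilityMeasure μ],
      (μ.bind (fun x => κ x)) A = ∫⁻ x, g x ∂μ + a := by
    intro μ _
    rw [Measure.bind_apply hA (Kernel.measurable κ).aemeasurable]
    calc ∫⁻ x, κ x A ∂μ = ∫⁻ x, (g x + a) ∂μ := by
          simp_rw [← h_decomp]
      _ = ∫⁻ x, g x ∂μ + a := by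
          rw [lintegral_add_right _ measurable_const, lintegral_const, measure_univ, mul_one]
  -- layer cake
  have hlayer : ∀ (μ : Measure S),
      ∫⁻ x, g x ∂μ = ∫⁻ t in Set.Ioi (0:ℝ), μ {x | t ≤ f x} := by
    intro μ
    rw [← lintegral_eq_lintegral_meas_le μ (Filter.Eventually.of_forall hf_nn)
      hf_meas.aemeasurable]
    simp_rw [h_ofReal]
  -- pointwise comparison
  have hcmp : ∀ t ∈ Set.Ioi (0:ℝ),
      μ₁ {x | t ≤ f x} ≤ μ₂ {x | t ≤ f x}
        + (Set.Ioc (0:ℝ) (1 - δ)).indicator (fun _ => ENNReal.ofReal tv) t := by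
    intro t ht
    by_cases h : t ≤ 1 - δ
    · have hmem : t ∈ Set.Ioc (0:ℝ) (1 - δ) := ⟨ht, h⟩
      rw [Set.indicator_of_mem hmem]
      have hB : MeasurableSet {x | t ≤ f x} := hf_meas measurableSet_Ici
      have habs := abs_apply_le_tvDist μ₁ μ₂ hB
      have h1 : (μ₁ {x | t ≤ f x}).toReal ≤ (μ₂ {x | t ≤ f x}).toReal + tv := by
        rw [abs_sub_le_iff] at habs
        linarith [habs.1]
      calc μ₁ {x | t ≤ f x} = ENNReal.ofReal ((μ₁ {x | t ≤ f x}).toReal) :=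
            (ENNReal.ofReal_toReal (measure_ne_top _ _)).symm
        _ ≤ ENNReal.ofReal ((μ₂ {x | t ≤ f x}).toReal + tv) :=
            ENNReal.ofReal_le_ofReal h1
        _ = ENNReal.ofReal ((μ₂ {x | t ≤ f x}).toReal) + ENNReal.ofReal tv :=
            ENNReal.ofReal_add ENNReal.toReal_nonneg htv
        _ = μ₂ {x | t ≤ f x} + ENNReal.ofReal tv := by
            rw [ENNReal.ofReal_toReal (measure_ne_top _ _)]
    · have : {x | t ≤ f x} = ∅ := by
        ext x
        simp only [Set.mem_setOf_eq, Set.mem_empty_iff_false, iff_false, not_le]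
        exact lt_of_le_of_lt (hf_le x) (lt_of_not_ge h)
      rw [this]
      simp
  -- integral comparison
  have hint : ∫⁻ t in Set.Ioi (0:ℝ), μ₁ {x | t ≤ f x}
      ≤ (∫⁻ t in Set.Ioi (0:ℝ), μ₂ {x | t ≤ f x}) + ENNReal.ofReal tv * ENNReal.ofReal (1 - δ) := by
    calc ∫⁻ t in Set.Ioi (0:ℝ), μ₁ {x | t ≤ f x}
        ≤ ∫⁻ t in Set.Ioi (0:ℝ), (μ₂ {x | t ≤ f x}
            + (Set.Ioc (0:ℝ) (1 - δ)).indicator (fun _ => ENNReal.ofReal tv) t) :=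
          lintegral_mono_ae ((ae_restrict_iff' measurableSet_Ioi).2 (Filter.Eventually.of_forall hcmp))
      _ = (∫⁻ t in Set.Ioi (0:ℝ), μ₂ {x | t ≤ f x})
            + ∫⁻ t in Set.Ioi (0:ℝ), (Set.Ioc (0:ℝ) (1 - δ)).indicator (fun _ => ENNReal.ofReal tv) t :=
          lintegral_add_right _ (measurable_const.indicator measurableSet_Ioc)
      _ = (∫⁻ t in Set.Ioi (0:ℝ), μ₂ {x | t ≤ f x}) + ENNReal.ofReal tv * ENNReal.ofReal (1 - δ) := by
          congr 1
          rw [lintegral_indicator measurableSet_Ioc, setLIntegral_const,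
            Measure.restrict_apply measurableSet_Ioc,
            Set.inter_eq_self_of_subset_left Set.Ioc_subset_Ioi_self, Real.volume_Ioc]
          norm_num
  -- combine
  have hXfin : ∀ (μ : Measure S) [IsProbabilityMeasure μ],
      ∫⁻ x, g x ∂μ ≤ ENNReal.ofReal (1 - δ) := by
    intro μ _
    calc ∫⁻ x, g x ∂μ ≤ ∫⁻ _, ENNReal.ofReal (1 - δ) ∂μ := lintegral_mono hg_le
      _ = ENNReal.ofReal (1 - δ) := by rw [lintegral_const, measure_univ, mul_one]
  have hmain : (μ₁.bind (fun x => κ x)) A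
      ≤ (μ₂.bind (fun x => κ x)) A + ENNReal.ofReal ((1 - δ) * tv) := by
    rw [hbind μ₁, hbind μ₂, hlayer μ₁, hlayer μ₂]
    calc (∫⁻ t in Set.Ioi (0:ℝ), μ₁ {x | t ≤ f x}) + a
        ≤ ((∫⁻ t in Set.Ioi (0:ℝ), μ₂ {x | t ≤ f x}) + ENNReal.ofReal tv * ENNReal.ofReal (1 - δ)) + a :=
          add_le_add_left hint a
      _ = (∫⁻ t in Set.Ioi (0:ℝ), μ₂ {x | t ≤ f x}) + a + ENNReal.ofReal ((1 - δ) * tv) := by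
          rw [ENNReal.ofReal_mul h1δ, mul_comm (ENNReal.ofReal tv)]
          ring
  have hrhs_fin : (μ₂.bind (fun x => κ x)) A + ENNReal.ofReal ((1 - δ) * tv) ≠ ⊤ := by
    apply ENNReal.add_ne_top.2
    constructor
    · rw [hbind μ₂]
      exact ENNReal.add_ne_top.2 ⟨ne_top_of_le_ne_top ENNReal.ofReal_ne_top (hXfin μ₂),
        ENNReal.mul_ne_top ENNReal.ofReal_ne_top (measure_ne_top _ _)⟩
    · exact ENNReal.ofReal_ne_top
  have := ENNReal.toReal_mono hrhs_fin hmain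
  rwa [ENNReal.toReal_add (by
      intro h; exact hrhs_fin (by rw [ENNReal.add_eq_top]; left; exact h))
    ENNReal.ofReal_ne_top, ENNReal.toReal_ofReal (mul_nonneg h1δ htv)] at this

end Aux

/-- **Supporting lemma for Theorem 2 (Doeblin contraction).** If a Markov kernel `κ` satisfies
the minorization condition `κ x A ≥ δ · ν A` for every state `x` and measurable set `A`, with
`δ ∈ (0,1]` and `ν` a probability measure, then one step of the kernel contracts the total
variation distance between probability measures by the factor `1 - δ`. -/
theorem doeblin_tv_contraction
    {S : Type*} [MeasurableSpace S]
    (κ : Kernel S S) [IsMarkovKernel κ]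
    (ν : Measure S) [IsProbabilityMeasure ν]
    (δ : ℝ) (hδ : δ ∈ Set.Ioc (0 : ℝ) 1)
    (hmin : ∀ x : S, ∀ A : Set S, MeasurableSet A → ENNReal.ofReal δ * ν A ≤ κ x A) :
    ∀ μ₁ μ₂ : Measure S, IsProbabilityMeasure μ₁ → IsProbabilityMeasure μ₂ →
      tvDist (μ₁.bind (fun x => κ x)) (μ₂.bind (fun x => κ x))
        ≤ (1 - δ) * tvDist μ₁ μ₂ := by
  intro μ₁ μ₂ h1 h2
  haveI := h1; haveI := h2
  haveI : Nonempty {A : Set S // MeasurableSet A} := ⟨⟨∅, MeasurableSet.empty⟩⟩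
  apply ciSup_le
  rintro ⟨A, hA⟩
  rw [abs_sub_le_iff]
  constructor
  · have := doeblin_key κ ν δ hδ hmin μ₁ μ₂ hA
    linarith
  · have := doeblin_key κ ν δ hδ hmin μ₂ μ₁ hA
    rw [tvDist_comm μ₂ μ₁] at this
    linarith
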